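/- Let n ≥ 3, k > 1, and let f ∈ C₀⁴(ℝⁿ), g ∈ C₀³(ℝⁿ) with supports in {|x| ≤ k}. Then there is a constant C depending only on n and k such that (t + |x| + 2k)^{n−2} |V(x,t)| ≤ C ( Σ_{|β|≤2} ‖∇ₓ^β f‖_{L^∞} + Σ_{|γ|≤1} ‖∇ₓ^γ g‖_{L^∞} ) for all (x,t) ∈ ℝⁿ × [0,∞), where V(x,t) = (1/ωₙ)∫_{|ω|=1}((tω·∇f)/(n−2) + f + tg)(x+tω) dS_ω. -/

import Mathlib

open MeasureTheory Metric Set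
open scoped ENNReal


open MeasureTheory Metric

/-- The surface measure of the unit sphere in `ℝⁿ`. -/
noncomputable def sphereMeasure (n : ℕ) :
    Measure (sphere (0 : EuclideanSpace ℝ (Fin n)) 1) :=
  Measure.toSphere (volume : Measure (EuclideanSpace ℝ (Fin n)))

/-- Total mass `ωₙ` of the unit sphere in `ℝⁿ`. -/
noncomputable def sphereArea (n : ℕ) : ℝ := ((sphereMeasure n) Set.univ).toReal

/-- The linear part `V` of the Agemi–Takamura integral equation. -/
noncomputable def linearPart (n : ℕ) (f g : EuclideanSpace ℝ (Fin n) → ℝ)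
    (x : EuclideanSpace ℝ (Fin n)) (t : ℝ) : ℝ :=
  (sphereArea n)⁻¹ *
    ∫ ω : sphere (0 : EuclideanSpace ℝ (Fin n)) 1,
      (t * fderiv ℝ f (x + t • (ω : EuclideanSpace ℝ (Fin n)))
          (ω : EuclideanSpace ℝ (Fin n)) / ((n : ℝ) - 2)
        + f (x + t • (ω : EuclideanSpace ℝ (Fin n)))
        + t * g (x + t • (ω : EuclideanSpace ℝ (Fin n))))
      ∂(sphereMeasure n)

lemma cap_bound (n : ℕ) (hn : 1 ≤ n) (k t : ℝ) (hk : 0 < k) (ht : k ≤ t)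
    (x : EuclideanSpace ℝ (Fin n)) :
    sphereMeasure n {ω : sphere (0 : EuclideanSpace ℝ (Fin n)) 1 |
        ‖x + t • (ω : EuclideanSpace ℝ (Fin n))‖ ≤ k} *
      ENNReal.ofReal (t ^ (n - 1) * k)
      ≤ volume (closedBall (0 : EuclideanSpace ℝ (Fin n)) (2 * k)) := by
  classical
  have ht0 : 0 < t := hk.trans_le ht
  set A : Set (sphere (0 : EuclideanSpace ℝ (Fin n)) 1) :=
    {ω : sphere (0 : EuclideanSpace ℝ (Fin n)) 1 | ‖x + t • (ω : EuclideanSpace ℝ (Fin n))‖ ≤ k} with hAdef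
  have hA : MeasurableSet A := by
    have hcont : Continuous fun ω : sphere (0 : EuclideanSpace ℝ (Fin n)) 1 => ‖x + t • (ω : EuclideanSpace ℝ (Fin n))‖ :=
      (continuous_const.add (continuous_subtype_val.const_smul t)).norm
    exact hcont.measurable measurableSet_Iic
  set S : Set (Ioi (0 : ℝ)) := (Subtype.val) ⁻¹' (Ioo t (t + k)) with hSdef
  have hS : MeasurableSet S := measurable_subtype_coe measurableSet_Ioo
  -- lower bound for the radial measure
  have hIoo : ENNReal.ofReal (t ^ (n - 1) * k) ≤ Measure.volumeIoiPow (n - 1) S := by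
    rw [Measure.volumeIoiPow, withDensity_apply _ hS,
      setLIntegral_subtype measurableSet_Ioi _ (fun a : ℝ => ENNReal.ofReal (a ^ (n - 1)))]
    have himg : (Subtype.val : Ioi (0:ℝ) → ℝ) '' S = Ioo t (t + k) := by
      rw [hSdef, Subtype.image_preimage_coe]
      exact inter_eq_right.2 fun r hr => lt_trans ht0 hr.1
    rw [himg]
    calc ENNReal.ofReal (t ^ (n - 1) * k)
        = ∫⁻ _ in Ioo t (t + k), ENNReal.ofReal (t ^ (n - 1)) := by
          rw [setLIntegral_const, Real.volume_Ioo, add_sub_cancel_left,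
            ← ENNReal.ofReal_mul (pow_nonneg ht0.le _)]
      _ ≤ ∫⁻ a in Ioo t (t + k), ENNReal.ofReal (a ^ (n - 1)) := by
          refine setLIntegral_mono (by fun_prop) fun a ha => ?_
          exact ENNReal.ofReal_le_ofReal
            (pow_le_pow_left₀ ht0.le ha.1.le _)
  -- polar decomposition
  have hfr : Module.finrank ℝ (EuclideanSpace ℝ (Fin n)) - 1 = n - 1 := by
    rw [finrank_euclideanSpace_fin]
  have hmp := (Measure.measurePreserving_homeomorphUnitSphereProd (volume : Measure (EuclideanSpace ℝ (Fin n))))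
  have key : ((volume : Measure (EuclideanSpace ℝ (Fin n))).toSphere.prod
        (Measure.volumeIoiPow (Module.finrank ℝ (EuclideanSpace ℝ (Fin n)) - 1))) (A ×ˢ S)
      = volume ((Subtype.val) '' ((homeomorphUnitSphereProd (EuclideanSpace ℝ (Fin n))) ⁻¹' (A ×ˢ S))) := by
    rw [← hmp.measure_preimage (hA.prod hS).nullMeasurableSet,
      comap_subtype_coe_apply (measurableSet_singleton (0 : EuclideanSpace ℝ (Fin n))).compl]
  have hsub : (Subtype.val) '' ((homeomorphUnitSphereProd (EuclideanSpace ℝ (Fin n))) ⁻¹' (A ×ˢ S))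
      ⊆ closedBall (-x) (2 * k) := by
    rintro z ⟨⟨z, hz0⟩, hmem, rfl⟩
    have hz0' : z ≠ 0 := hz0
    have hnz : ‖z‖ ≠ 0 := norm_ne_zero_iff.2 hz0'
    obtain ⟨h1, h2⟩ := hmem
    set ω : EuclideanSpace ℝ (Fin n) := ‖z‖⁻¹ • z with hω
    have h1' : ‖x + t • ω‖ ≤ k := by
      have h1c := h1
      simp only [hAdef, Set.mem_setOf_eq, homeomorphUnitSphereProd, homeomorphSphereProd_apply_fst_coe, one_smul] at h1c
      exact h1c
    have h2' : ‖z‖ ∈ Ioo t (t + k) := by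
      have h2c := h2
      simp only [hSdef, Set.mem_preimage, homeomorphUnitSphereProd, homeomorphSphereProd_apply_snd_coe, div_one] at h2c
      exact h2c
    have hωn : ‖ω‖ = 1 := by
      rw [hω, norm_smul, norm_inv, norm_norm, inv_mul_cancel₀ hnz]
    have hzω : ‖z‖ • ω = z := by
      rw [hω, smul_smul, mul_inv_cancel₀ hnz, one_smul]
    have : x + z = (x + t • ω) + (‖z‖ - t) • ω := by
      rw [sub_smul, hzω]; abel
    have hb : ‖x + z‖ ≤ 2 * k := by
      rw [this]
      calc ‖(x + t • ω) + (‖z‖ - t) • ω‖ ≤ ‖x + t • ω‖ + ‖(‖z‖ - t) • ω‖ := norm_add_le _ _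
        _ ≤ k + k := by
            refine add_le_add h1' ?_
            rw [norm_smul, hωn, mul_one, Real.norm_eq_abs,
              abs_of_nonneg (by linarith [h2'.1])]
            linarith [h2'.2]
        _ = 2 * k := by ring
    simpa [mem_closedBall, dist_eq_norm, sub_neg_eq_add, add_comm] using hb
  calc sphereMeasure n A * ENNReal.ofReal (t ^ (n - 1) * k)
      ≤ (volume : Measure (EuclideanSpace ℝ (Fin n))).toSphere A * Measure.volumeIoiPow (n - 1) S := by
        exact mul_le_mul_right hIoo _
    _ = ((volume : Measure (EuclideanSpace ℝ (Fin n))).toSphere.prod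
          (Measure.volumeIoiPow (Module.finrank ℝ (EuclideanSpace ℝ (Fin n)) - 1))) (A ×ˢ S) := by
        rw [hfr, Measure.prod_prod]
    _ = volume ((Subtype.val) '' ((homeomorphUnitSphereProd (EuclideanSpace ℝ (Fin n))) ⁻¹' (A ×ˢ S))) := key
    _ ≤ volume (closedBall (-x) (2 * k)) := measure_mono hsub
    _ = volume (closedBall (0 : EuclideanSpace ℝ (Fin n)) (2 * k)) := by
        rw [Measure.addHaar_closedBall_center]

lemma norm_iteratedFDeriv_le_csupr {n j : ℕ} {m : WithTop ℕ∞} {f : EuclideanSpace ℝ (Fin n) → ℝ}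
    (hf : ContDiff ℝ m f) (hj : (j : WithTop ℕ∞) ≤ m) (hs : HasCompactSupport f)
    (y : EuclideanSpace ℝ (Fin n)) :
    ‖iteratedFDeriv ℝ j f y‖ ≤ ⨆ z, ‖iteratedFDeriv ℝ j f z‖ :=
  le_ciSup (((hf.continuous_iteratedFDeriv hj).norm).bddAbove_range_of_hasCompactSupport
    ((hs.iteratedFDeriv j).norm)) y


set_option maxHeartbeats 1000000 in
/-- Decay estimate for the linear part `V`. -/
theorem decay_linear_part (n : ℕ) (hn : 3 ≤ n) (k : ℝ) (hk : 1 < k) :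
    ∃ C : ℝ, 0 < C ∧
      ∀ (f g : EuclideanSpace ℝ (Fin n) → ℝ),
        ContDiff ℝ 4 f → ContDiff ℝ 3 g →
        tsupport f ⊆ closedBall (0 : EuclideanSpace ℝ (Fin n)) k →
        tsupport g ⊆ closedBall (0 : EuclideanSpace ℝ (Fin n)) k →
        ∀ (x : EuclideanSpace ℝ (Fin n)) (t : ℝ), 0 ≤ t →
          (t + ‖x‖ + 2 * k) ^ (n - 2) * |linearPart n f g x t|
            ≤ C * ((∑ j ∈ Finset.range 3, ⨆ y, ‖iteratedFDeriv ℝ j f y‖)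
                + ∑ j ∈ Finset.range 2, ⨆ y, ‖iteratedFDeriv ℝ j g y‖) := by
  classical
  have hn2 : (1 : ℝ) ≤ (n : ℝ) - 2 := by
    have : (3 : ℝ) ≤ (n : ℝ) := by exact_mod_cast hn
    linarith
  have hk0 : (0 : ℝ) < k := lt_trans one_pos hk
  haveI : IsFiniteMeasure (sphereMeasure n) := by unfold sphereMeasure; infer_instance
  set c : ℝ := sphereArea n with hcdef
  have hc : 0 < c := by
    rw [hcdef, sphereArea]
    refine ENNReal.toReal_pos ?_ (measure_ne_top _ _)
    rw [sphereMeasure, Measure.toSphere_apply_univ, finrank_euclideanSpace_fin]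
    exact mul_ne_zero (by exact_mod_cast (by omega : n ≠ 0)) (measure_ball_pos _ _ one_pos).ne'
  set B : ℝ := (volume (closedBall (0 : EuclideanSpace ℝ (Fin n)) (2 * k))).toReal with hBdef
  have hB : 0 < B :=
    ENNReal.toReal_pos (measure_closedBall_pos _ _ (by linarith)).ne' measure_closedBall_lt_top.ne
  refine ⟨(5 * k) ^ (n - 2) * (k + 1) + 5 ^ (n - 2) * c⁻¹ * (B / k) + 1, by positivity, ?_⟩
  intro f g hf hg hsf hsg x t ht
  have hcf : HasCompactSupport f :=
    HasCompactSupport.of_support_subset_isCompact (isCompact_closedBall _ _)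
      (subset_trans subset_closure hsf)
  have hcg : HasCompactSupport g :=
    HasCompactSupport.of_support_subset_isCompact (isCompact_closedBall _ _)
      (subset_trans subset_closure hsg)
  set Sf0 : ℝ := ⨆ y, ‖iteratedFDeriv ℝ 0 f y‖ with hSf0def
  set Sf1 : ℝ := ⨆ y, ‖iteratedFDeriv ℝ 1 f y‖ with hSf1def
  set Sg0 : ℝ := ⨆ y, ‖iteratedFDeriv ℝ 0 g y‖ with hSg0def
  have hSf0n : 0 ≤ Sf0 := Real.iSup_nonneg fun _ => norm_nonneg _
  have hSf1n : 0 ≤ Sf1 := Real.iSup_nonneg fun _ => norm_nonneg _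
  have hSg0n : 0 ≤ Sg0 := Real.iSup_nonneg fun _ => norm_nonneg _
  have hbf0 : ∀ y, |f y| ≤ Sf0 := by
    intro y
    rw [← Real.norm_eq_abs, ← norm_iteratedFDeriv_zero (𝕜 := ℝ) (f := f) (x := y)]
    exact norm_iteratedFDeriv_le_csupr hf (by norm_num) hcf y
  have hbf1 : ∀ y, ‖fderiv ℝ f y‖ ≤ Sf1 := by
    intro y
    have h1 : ‖fderiv ℝ f y‖ = ‖iteratedFDeriv ℝ 1 f y‖ := by
      rw [← norm_iteratedFDeriv_zero (𝕜 := ℝ) (f := fderiv ℝ f) (x := y)]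
      exact norm_iteratedFDeriv_fderiv
    rw [h1]
    exact norm_iteratedFDeriv_le_csupr hf (by norm_num) hcf y
  have hbg0 : ∀ y, |g y| ≤ Sg0 := by
    intro y
    rw [← Real.norm_eq_abs, ← norm_iteratedFDeriv_zero (𝕜 := ℝ) (f := g) (x := y)]
    exact norm_iteratedFDeriv_le_csupr hg (by norm_num) hcg y
  set S' : ℝ := Sf0 + Sf1 + Sg0 with hS'def
  have hS'0 : 0 ≤ S' := by positivity
  set Stot : ℝ := (∑ j ∈ Finset.range 3, ⨆ y, ‖iteratedFDeriv ℝ j f y‖)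
      + ∑ j ∈ Finset.range 2, ⨆ y, ‖iteratedFDeriv ℝ j g y‖ with hStotdef
  have hStot : S' ≤ Stot := by
    have h2 : (0:ℝ) ≤ ⨆ y, ‖iteratedFDeriv ℝ 2 f y‖ := Real.iSup_nonneg fun _ => norm_nonneg _
    have h3 : (0:ℝ) ≤ ⨆ y, ‖iteratedFDeriv ℝ 1 g y‖ := Real.iSup_nonneg fun _ => norm_nonneg _
    rw [hStotdef]
    simp only [Finset.sum_range_succ, Finset.sum_range_zero, zero_add]
    rw [hS'def, ← hSf0def, ← hSf1def, ← hSg0def]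
    linarith
  have hStot0 : 0 ≤ Stot := le_trans hS'0 hStot
  set A : Set (sphere (0 : EuclideanSpace ℝ (Fin n)) 1) :=
    {ω : sphere (0 : EuclideanSpace ℝ (Fin n)) 1 |
      ‖x + t • (ω : EuclideanSpace ℝ (Fin n))‖ ≤ k} with hAdef
  have hA : MeasurableSet A := by
    have hcont : Continuous fun ω : sphere (0 : EuclideanSpace ℝ (Fin n)) 1 =>
        ‖x + t • (ω : EuclideanSpace ℝ (Fin n))‖ :=
      (continuous_const.add (continuous_subtype_val.const_smul t)).norm
    exact hcont.measurable measurableSet_Iic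
  set M : ℝ := t * Sf1 / ((n : ℝ) - 2) + Sf0 + t * Sg0 with hMdef
  have hM0 : 0 ≤ M := by
    have h : (0:ℝ) < (n:ℝ) - 2 := by linarith
    have h1 : 0 ≤ t * Sf1 / ((n : ℝ) - 2) := by positivity
    have h2 : 0 ≤ t * Sg0 := by positivity
    rw [hMdef]; linarith
  have hFb : ∀ ω : sphere (0 : EuclideanSpace ℝ (Fin n)) 1,
      ‖(t * fderiv ℝ f (x + t • (ω : EuclideanSpace ℝ (Fin n)))
          (ω : EuclideanSpace ℝ (Fin n)) / ((n : ℝ) - 2)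
        + f (x + t • (ω : EuclideanSpace ℝ (Fin n)))
        + t * g (x + t • (ω : EuclideanSpace ℝ (Fin n))))‖
        ≤ A.indicator (fun _ => M) ω := by
    intro ω
    by_cases hω : ω ∈ A
    · rw [Set.indicator_of_mem hω]
      set y := x + t • (ω : EuclideanSpace ℝ (Fin n)) with hydef
      have hωn : ‖(ω : EuclideanSpace ℝ (Fin n))‖ = 1 := mem_sphere_zero_iff_norm.1 ω.2
      have hd : |fderiv ℝ f y (ω : EuclideanSpace ℝ (Fin n))| ≤ Sf1 := by
        rw [← Real.norm_eq_abs]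
        calc ‖fderiv ℝ f y (ω : EuclideanSpace ℝ (Fin n))‖
            ≤ ‖fderiv ℝ f y‖ * ‖(ω : EuclideanSpace ℝ (Fin n))‖ :=
              ContinuousLinearMap.le_opNorm _ _
          _ = ‖fderiv ℝ f y‖ := by rw [hωn, mul_one]
          _ ≤ Sf1 := hbf1 y
      have hpos : (0:ℝ) < (n:ℝ) - 2 := by linarith
      have h1 : |t * fderiv ℝ f y (ω : EuclideanSpace ℝ (Fin n)) / ((n:ℝ) - 2)|
          ≤ t * Sf1 / ((n:ℝ) - 2) := by
        rw [abs_div, abs_mul, abs_of_nonneg ht, abs_of_nonneg hpos.le]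
        have h2 : t * |fderiv ℝ f y (ω : EuclideanSpace ℝ (Fin n))| ≤ t * Sf1 :=
          mul_le_mul_of_nonneg_left hd ht
        exact (div_le_div_iff_of_pos_right hpos).2 h2
      have h3 : |t * g y| ≤ t * Sg0 := by
        rw [abs_mul, abs_of_nonneg ht]
        exact mul_le_mul_of_nonneg_left (hbg0 y) ht
      rw [Real.norm_eq_abs, hMdef]
      calc |t * fderiv ℝ f y (ω : EuclideanSpace ℝ (Fin n)) / ((n:ℝ) - 2) + f y + t * g y|
          ≤ |t * fderiv ℝ f y (ω : EuclideanSpace ℝ (Fin n)) / ((n:ℝ) - 2)| + |f y| + |t * g y| :=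
            abs_add_three _ _ _
        _ ≤ t * Sf1 / ((n : ℝ) - 2) + Sf0 + t * Sg0 :=
            add_le_add (add_le_add h1 (hbf0 y)) h3
    · rw [Set.indicator_of_notMem hω]
      have hknot : ¬ ‖x + t • (ω : EuclideanSpace ℝ (Fin n))‖ ≤ k := hω
      have hyf : x + t • (ω : EuclideanSpace ℝ (Fin n)) ∉ tsupport f := fun hmem =>
        hknot (by simpa [mem_closedBall_zero_iff] using hsf hmem)
      have hyg : x + t • (ω : EuclideanSpace ℝ (Fin n)) ∉ tsupport g := fun hmem =>
        hknot (by simpa [mem_closedBall_zero_iff] using hsg hmem)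
      have h0f : f (x + t • (ω : EuclideanSpace ℝ (Fin n))) = 0 :=
        image_eq_zero_of_notMem_tsupport hyf
      have h0g : g (x + t • (ω : EuclideanSpace ℝ (Fin n))) = 0 :=
        image_eq_zero_of_notMem_tsupport hyg
      have h0d : fderiv ℝ f (x + t • (ω : EuclideanSpace ℝ (Fin n))) = 0 := by
        by_contra hne
        exact hyf (support_fderiv_subset ℝ (Function.mem_support.2 hne))
      simp [h0f, h0g, h0d]
  have hint : ‖∫ ω : sphere (0 : EuclideanSpace ℝ (Fin n)) 1,
      (t * fderiv ℝ f (x + t • (ω : EuclideanSpace ℝ (Fin n)))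
          (ω : EuclideanSpace ℝ (Fin n)) / ((n : ℝ) - 2)
        + f (x + t • (ω : EuclideanSpace ℝ (Fin n)))
        + t * g (x + t • (ω : EuclideanSpace ℝ (Fin n))))
      ∂(sphereMeasure n)‖ ≤ (sphereMeasure n A).toReal * M := by
    calc ‖∫ ω : sphere (0 : EuclideanSpace ℝ (Fin n)) 1,
        (t * fderiv ℝ f (x + t • (ω : EuclideanSpace ℝ (Fin n)))
            (ω : EuclideanSpace ℝ (Fin n)) / ((n : ℝ) - 2)
          + f (x + t • (ω : EuclideanSpace ℝ (Fin n)))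
          + t * g (x + t • (ω : EuclideanSpace ℝ (Fin n))))
        ∂(sphereMeasure n)‖
        ≤ ∫ ω, A.indicator (fun _ => M) ω ∂(sphereMeasure n) :=
          norm_integral_le_of_norm_le ((integrable_const M).indicator hA)
            (Filter.Eventually.of_forall hFb)
      _ = (sphereMeasure n A).toReal * M := by
          rw [integral_indicator_const _ hA, smul_eq_mul, measureReal_def]
  have hVle : |linearPart n f g x t| ≤ c⁻¹ * ((sphereMeasure n A).toReal * M) := by
    rw [linearPart, ← hcdef, abs_mul, abs_of_nonneg (inv_nonneg.2 hc.le), ← Real.norm_eq_abs]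
    exact mul_le_mul_of_nonneg_left hint (inv_nonneg.2 hc.le)
  rcases le_or_gt (‖x‖) (t + k) with hx | hx
  · rcases le_or_gt t k with htk | htk
    · have hA1 : (sphereMeasure n A).toReal ≤ c := by
        rw [hcdef, sphereArea]
        exact ENNReal.toReal_mono (measure_ne_top _ _) (measure_mono (Set.subset_univ _))
      have hMk : M ≤ (k + 1) * S' := by
        have h1 : t * Sf1 / ((n:ℝ) - 2) ≤ t * Sf1 := div_le_self (by positivity) hn2
        have h2 : t * Sf1 ≤ k * Sf1 := mul_le_mul_of_nonneg_right htk hSf1n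
        have h3 : t * Sg0 ≤ k * Sg0 := mul_le_mul_of_nonneg_right htk hSg0n
        have h4 : 0 ≤ k * Sf0 := by positivity
        rw [hMdef, hS'def]; nlinarith
      have hVle2 : |linearPart n f g x t| ≤ (k+1) * S' := by
        calc |linearPart n f g x t| ≤ c⁻¹ * ((sphereMeasure n A).toReal * M) := hVle
          _ ≤ c⁻¹ * (c * M) :=
              mul_le_mul_of_nonneg_left (mul_le_mul_of_nonneg_right hA1 hM0) (inv_nonneg.2 hc.le)
          _ = M := by field_simp
          _ ≤ (k+1) * S' := hMk
      have hbase : t + ‖x‖ + 2*k ≤ 5*k := by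
        have := norm_nonneg x; linarith
      have hbase0 : (0:ℝ) ≤ t + ‖x‖ + 2*k := by
        have := norm_nonneg x; linarith
      calc (t + ‖x‖ + 2*k)^(n-2) * |linearPart n f g x t|
          ≤ (5*k)^(n-2) * ((k+1) * S') :=
            mul_le_mul (pow_le_pow_left₀ hbase0 hbase _) hVle2 (abs_nonneg _) (by positivity)
        _ = ((5*k)^(n-2) * (k+1)) * S' := by ring
        _ ≤ ((5*k)^(n-2)*(k+1) + 5^(n-2)*c⁻¹*(B/k) + 1) * Stot := by
            refine mul_le_mul ?_ hStot hS'0 ?_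
            · have h5 : (0:ℝ) ≤ 5^(n-2)*c⁻¹*(B/k) := by positivity
              linarith
            · positivity
    · have hcap := cap_bound n (by omega) k t hk0 htk.le x
      rw [← hAdef] at hcap
      have ht0 : (0:ℝ) < t := lt_trans hk0 htk
      have h1 : (sphereMeasure n A).toReal * (t ^ (n-1) * k) ≤ B := by
        have h2 := ENNReal.toReal_mono measure_closedBall_lt_top.ne hcap
        rwa [ENNReal.toReal_mul, ENNReal.toReal_ofReal (by positivity)] at h2
      have ht1 : (1:ℝ) ≤ t := le_trans hk.le htk.le
      have hMt : M ≤ t * S' := by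
        have hdd : t * Sf1 / ((n:ℝ)-2) ≤ t * Sf1 := div_le_self (by positivity) hn2
        have h2 : Sf0 ≤ t * Sf0 := le_mul_of_one_le_left hSf0n ht1
        rw [hMdef, hS'def]; nlinarith
      have hpow : t^(n-1) = t^(n-2) * t := by
        rw [← pow_succ]; congr 1; omega
      have haB : (sphereMeasure n A).toReal * t^(n-1) ≤ B / k := by
        rw [le_div_iff₀ hk0]; nlinarith
      have hbase : t + ‖x‖ + 2*k ≤ 5*t := by linarith
      have hbase0 : (0:ℝ) ≤ t + ‖x‖ + 2*k := by
        have := norm_nonneg x; linarith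
      have ha0 : 0 ≤ (sphereMeasure n A).toReal := ENNReal.toReal_nonneg
      calc (t + ‖x‖ + 2*k)^(n-2) * |linearPart n f g x t|
          ≤ (5*t)^(n-2) * (c⁻¹ * ((sphereMeasure n A).toReal * M)) :=
            mul_le_mul (pow_le_pow_left₀ hbase0 hbase _) hVle (abs_nonneg _) (by positivity)
        _ ≤ (5*t)^(n-2) * (c⁻¹ * ((sphereMeasure n A).toReal * (t * S'))) := by
            refine mul_le_mul_of_nonneg_left (mul_le_mul_of_nonneg_left
              (mul_le_mul_of_nonneg_left hMt ha0) (inv_nonneg.2 hc.le)) (by positivity)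
        _ = (5^(n-2) * c⁻¹ * ((sphereMeasure n A).toReal * t^(n-1))) * S' := by
            rw [mul_pow, hpow]; ring
        _ ≤ (5^(n-2) * c⁻¹ * (B / k)) * S' :=
            mul_le_mul_of_nonneg_right (mul_le_mul_of_nonneg_left haB (by positivity)) hS'0
        _ ≤ ((5*k)^(n-2)*(k+1) + 5^(n-2)*c⁻¹*(B/k) + 1) * Stot := by
            refine mul_le_mul ?_ hStot hS'0 ?_
            · have h5 : (0:ℝ) ≤ (5*k)^(n-2)*(k+1) := by positivity
              linarith
            · positivity
  · have hAe : A = ∅ := by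
      rw [hAdef]; ext ω
      simp only [Set.mem_setOf_eq, Set.mem_empty_iff_false, iff_false, not_le]
      have hωn : ‖(ω : EuclideanSpace ℝ (Fin n))‖ = 1 := mem_sphere_zero_iff_norm.1 ω.2
      have h1 : ‖x‖ ≤ ‖x + t • (ω : EuclideanSpace ℝ (Fin n))‖ + t := by
        have h2 : ‖x‖ ≤ ‖x + t • (ω : EuclideanSpace ℝ (Fin n))‖
            + ‖t • (ω : EuclideanSpace ℝ (Fin n))‖ := by
          simpa using norm_sub_le (x + t • (ω : EuclideanSpace ℝ (Fin n)))
            (t • (ω : EuclideanSpace ℝ (Fin n)))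
        rwa [norm_smul, hωn, mul_one, Real.norm_eq_abs, abs_of_nonneg ht] at h2
      linarith
    have hV0 : |linearPart n f g x t| = 0 := by
      refine le_antisymm ?_ (abs_nonneg _)
      rw [hAe] at hVle
      simpa using hVle
    rw [hV0, mul_zero]
    positivity
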